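/- arXiv:1205.3726 — 4 statements merged into one kernel-verified Lean document; each statement's English description precedes it below -/
import Mathlib

section
/- Let G be a sub-σ-algebra of F and let w, f : Ω → ℝ be functions with w ≥ 0 P-a.e. and f ≥ 0 P-a.e., such that w and f·w are integrable. Then the measure P.withDensity(ω ↦ ENNReal.ofReal(E[f·w | G](ω))) is absolutely continuous with respect to the measure P.withDensity(ω ↦ ENNReal.ofReal(E[w | G](ω))). Equivalently: every measurable set on which E[w|G] integrates to zero is a set on which E[f·w|G] integrates to zero. -/
open MeasureTheory

/-- For nonnegative `w` and `f` with `w` and `f·w` integrable, the measure with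
density `E[f·w | G]` is absolutely continuous with respect to the measure with
density `E[w | G]`. -/
theorem stmt_5 {Ω : Type*} {mΩ : MeasurableSpace Ω} {P : Measure Ω} [IsProbabilityMeasure P]
    (G : MeasurableSpace Ω) (hG : G ≤ mΩ)
    (w f : Ω → ℝ)
    (hw0 : 0 ≤ᵐ[P] w) (hf0 : 0 ≤ᵐ[P] f)
    (hwint : Integrable w P)
    (hfwint : Integrable (fun ω => f ω * w ω) P) :
    (P.withDensity fun ω => ENNReal.ofReal ((P[fun ω' => f ω' * w ω' | G]) ω))
      ≪ (P.withDensity fun ω => ENNReal.ofReal ((P[w | G]) ω)) := by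
  haveI : IsFiniteMeasure (P.trim hG) := isFiniteMeasure_trim hG
  set A : Set Ω := {ω | (P[w | G]) ω ≤ 0} with hA_def
  have hAmG : MeasurableSet[G] A :=
    (stronglyMeasurable_condExp (μ := P) (f := w) (m := G)).measurable
      measurableSet_Iic
  have hAm : MeasurableSet[mΩ] A := hG _ hAmG
  -- ∫_A w = 0
  have h1 : ∫ ω in A, w ω ∂P = ∫ ω in A, (P[w | G]) ω ∂P :=
    (setIntegral_condExp hG hwint hAmG).symm
  have h2 : ∫ ω in A, (P[w | G]) ω ∂P ≤ 0 := by
    apply integral_nonpos_of_ae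
    filter_upwards [ae_restrict_mem hAm] with ω hω using hω
  have h3 : 0 ≤ ∫ ω in A, w ω ∂P :=
    integral_nonneg_of_ae (ae_restrict_of_ae hw0)
  have h4 : ∫ ω in A, w ω ∂P = 0 := le_antisymm (h1 ▸ h2) h3
  -- w = 0 a.e. on A
  have hw_zero : w =ᵐ[P.restrict A] 0 := by
    have := (integral_eq_zero_iff_of_nonneg_ae (ae_restrict_of_ae hw0)
      (hwint.restrict)).mp h4
    exact this
  have hfw_zero : (fun ω => f ω * w ω) =ᵐ[P.restrict A] 0 := by
    filter_upwards [hw_zero] with ω hω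
    simp [hω]
  -- ∫_A E[fw|G] = 0
  have h5 : ∫ ω in A, (P[fun ω' => f ω' * w ω' | G]) ω ∂P = 0 := by
    rw [setIntegral_condExp hG hfwint hAmG]
    exact integral_eq_zero_of_ae hfw_zero
  have hcond_nonneg : 0 ≤ᵐ[P] P[fun ω' => f ω' * w ω' | G] := by
    apply condExp_nonneg
    filter_upwards [hf0, hw0] with ω h1 h2 using mul_nonneg h1 h2
  have hcond_zero : (P[fun ω' => f ω' * w ω' | G]) =ᵐ[P.restrict A] 0 := by
    refine (integral_eq_zero_iff_of_nonneg_ae (ae_restrict_of_ae hcond_nonneg) ?_).mp h5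
    exact (integrable_condExp).restrict
  have hcond_zero' : ∀ᵐ ω ∂P, ω ∈ A → (P[fun ω' => f ω' * w ω' | G]) ω = 0 :=
    (ae_restrict_iff' hAm).mp hcond_zero
  -- now AC
  refine Measure.AbsolutelyContinuous.mk fun s hs hs0 => ?_
  have hmeas_w : Measurable[mΩ] fun ω => ENNReal.ofReal ((P[w | G]) ω) :=
    ENNReal.measurable_ofReal.comp
      ((stronglyMeasurable_condExp (μ := P) (f := w) (m := G)).measurable.mono hG le_rfl)
  have hmeas_fw : Measurable[mΩ] fun ω =>
      ENNReal.ofReal ((P[fun ω' => f ω' * w ω' | G]) ω) :=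
    ENNReal.measurable_ofReal.comp
      ((stronglyMeasurable_condExp (μ := P) (f := fun ω' => f ω' * w ω') (m := G)).measurable.mono hG le_rfl)
  rw [withDensity_apply _ hs] at hs0 ⊢
  have hzero_on_s := (lintegral_eq_zero_iff hmeas_w).mp hs0
  rw [lintegral_eq_zero_iff hmeas_fw]
  filter_upwards [hzero_on_s, ae_restrict_of_ae hcond_zero'] with ω h1 h2
  have : (P[w | G]) ω ≤ 0 := by
    by_contra h
    push_neg at h
    simp [ENNReal.ofReal_eq_zero, not_le.mpr h] at h1
  simp [h2 this]
end

section
/- The set L^H of all elements of L²(Ω, F, P) having a representative of the form U_0 + Σ_{k=0}^{N−1} φ_k·ΔM_k, where U_0 is square-integrable and H_0-measurable and φ is an admissible ℍ-predictable process, is a closed linear subspace of L²(Ω, F, P). -/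
open MeasureTheory Filter Topology Finset

section AuxLemmas

variable {Ω : Type*} {mΩ : MeasurableSpace Ω} {P : Measure Ω} [IsProbabilityMeasure P]

/-- A.e. multiplicative limit of `m`-measurable functions admits an `m`-measurable factor. -/
lemma aux_lim_mul {m : MeasurableSpace Ω} (ψ : ℕ → Ω → ℝ)
    (hψ : ∀ n, StronglyMeasurable[m] (ψ n)) (V D : Ω → ℝ)
    (h : ∀ᵐ ω ∂P, Tendsto (fun n => ψ n ω * V ω) atTop (𝓝 (D ω))) :
    ∃ φ : Ω → ℝ, StronglyMeasurable[m] φ ∧ (fun ω => φ ω * V ω) =ᵐ[P] D := by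
  classical
  set A : Set Ω := {ω | ∃ c, Tendsto (fun n => ψ n ω) atTop (𝓝 c)} with hA
  have hAmeas : MeasurableSet[m] A :=
    measurableSet_exists_tendsto (fun n => (hψ n).measurable)
  set ψ' : ℕ → Ω → ℝ := fun n => A.indicator (ψ n) with hψ'
  have hψ'm : ∀ n, Measurable[m] (ψ' n) := fun n => ((hψ n).measurable).indicator hAmeas
  set φ : Ω → ℝ := fun ω => limUnder atTop (fun n => ψ' n ω) with hφ
  have heqA : ∀ ω ∈ A, (fun n => ψ' n ω) = fun n => ψ n ω := by
    intro ω hω; funext n; simp [ψ', Set.indicator_of_mem hω]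
  have hconv : ∀ ω, Tendsto (fun n => ψ' n ω) atTop (𝓝 (φ ω)) := by
    intro ω
    by_cases hω : ω ∈ A
    · obtain ⟨c, hc⟩ := hω
      refine tendsto_nhds_limUnder ⟨c, ?_⟩
      rw [heqA ω ⟨c, hc⟩]; exact hc
    · have heq : (fun n => ψ' n ω) = fun _ => (0 : ℝ) := by
        funext n; simp [ψ', Set.indicator_of_notMem hω]
      refine tendsto_nhds_limUnder ⟨0, ?_⟩
      rw [heq]; exact tendsto_const_nhds
  have hφm : StronglyMeasurable[m] φ :=
    (measurable_of_tendsto_metrizable' (f := ψ') atTop hψ'm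
      (tendsto_pi_nhds.mpr hconv)).stronglyMeasurable
  refine ⟨φ, hφm, ?_⟩
  filter_upwards [h] with ω hω
  by_cases hV : V ω = 0
  · have h0 : Tendsto (fun n => ψ n ω * V ω) atTop (𝓝 (0 : ℝ)) := by
      simp [hV]
    have : D ω = 0 := tendsto_nhds_unique hω h0
    simp [hV, this]
  · have hψc : Tendsto (fun n => ψ n ω) atTop (𝓝 (D ω / V ω)) := by
      have := hω.div_const (V ω)
      simpa [mul_div_cancel_right₀ _ hV] using this
    have hωA : ω ∈ A := ⟨_, hψc⟩
    have h1 : Tendsto (fun n => ψ n ω) atTop (𝓝 (φ ω)) := by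
      have := hconv ω; rwa [heqA ω hωA] at this
    have hφω : φ ω = D ω / V ω := tendsto_nhds_unique h1 hψc
    simp only [hφω]
    field_simp

lemma aux_condExpL2_ae_eq {m : MeasurableSpace Ω} (hm : m ≤ mΩ) (hL : Lp ℝ 2 P) :
    (↑↑(condExpL2 ℝ ℝ hm hL) : Ω → ℝ) =ᵐ[P] P[(hL : Ω → ℝ)|m] := by
  have h1 : Integrable ((hL : Ω → ℝ)) P := (Lp.memLp hL).integrable one_le_two
  have h2 : Integrable (↑↑(condExpL2 ℝ ℝ hm hL) : Ω → ℝ) P :=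
    integrable_condExpL2_of_isFiniteMeasure (𝕜 := ℝ) hm
  have h2' : ∀ s : Set Ω, MeasurableSet[m] s → P s < ⊤ →
      Integrable (↑↑(condExpL2 ℝ ℝ hm hL) : Ω → ℝ) (P.restrict s) :=
    fun s _ _ => h2.mono_measure Measure.restrict_le_self
  have h3 : ∀ s : Set Ω, MeasurableSet[m] s → P s < ⊤ →
      ∫ x in s, (↑↑(condExpL2 ℝ ℝ hm hL) : Ω → ℝ) x ∂P = ∫ x in s, (hL : Ω → ℝ) x ∂P :=
    fun s hs hμs => integral_condExpL2_eq hm hL hs hμs.ne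
  have h4 : AEStronglyMeasurable[m] (↑↑(condExpL2 ℝ ℝ hm hL) : Ω → ℝ) P :=
    aestronglyMeasurable_condExpL2 hm hL
  exact ae_eq_condExp_of_forall_setIntegral_eq hm h1 h2' h3 h4

lemma aux_memℒp_condexp {m : MeasurableSpace Ω} (hm : m ≤ mΩ) {h : Ω → ℝ}
    (hh : MemLp h 2 P) : MemLp (P[h|m]) 2 P := by
  have hbridge := aux_condExpL2_ae_eq hm (hh.toLp h)
  have h2 : P[((hh.toLp h : Lp ℝ 2 P) : Ω → ℝ)|m] =ᵐ[P] P[h|m] :=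
    condExp_congr_ae (MemLp.coeFn_toLp hh)
  exact (Lp.memLp (↑(condExpL2 ℝ ℝ hm (hh.toLp h)) : Lp ℝ 2 P)).ae_eq (hbridge.trans h2)

lemma aux_condExp_rep (N : ℕ) (𝔽 ℍ : Filtration ℕ mΩ) (hle : ∀ k, ℍ k ≤ 𝔽 k)
    (M : ℕ → Ω → ℝ) (hM : Martingale M 𝔽 P) (hM2 : ∀ k, MemLp (M k) 2 P)
    (U₀ : Ω → ℝ) (φ : ℕ → Ω → ℝ) (hU : MemLp U₀ 2 P) (hUm : StronglyMeasurable[ℍ 0] U₀)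
    (hφ : ∀ k, StronglyMeasurable[ℍ k] (φ k))
    (hφM : ∀ k, MemLp (fun ω => φ k ω * (M (k + 1) ω - M k ω)) 2 P) (j : ℕ) :
    P[fun ω => U₀ ω + ∑ k ∈ range N, φ k ω * (M (k + 1) ω - M k ω)|𝔽 j]
      =ᵐ[P] fun ω => U₀ ω + ∑ k ∈ range (min j N), φ k ω * (M (k + 1) ω - M k ω) := by
  classical
  set T : ℕ → Ω → ℝ := fun k ω => φ k ω * (M (k + 1) ω - M k ω) with hT
  have intU : Integrable U₀ P := hU.integrable one_le_two
  have intT : ∀ k, Integrable (T k) P := fun k => (hφM k).integrable one_le_two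
  have hadd : P[U₀ + ∑ k ∈ range N, T k|𝔽 j] =ᵐ[P]
      P[U₀|𝔽 j] + P[∑ k ∈ range N, T k|𝔽 j] :=
    condExp_add intU (integrable_finset_sum' _ fun k _ => intT k) (𝔽 j)
  have hsum : P[∑ k ∈ range N, T k|𝔽 j] =ᵐ[P] ∑ k ∈ range N, P[T k|𝔽 j] :=
    condExp_finsetSum (fun k _ => intT k) (𝔽 j)
  have hU0 : P[U₀|𝔽 j] =ᵐ[P] U₀ := by
    rw [condExp_of_stronglyMeasurable (𝔽.le j)
      (hUm.mono ((hle 0).trans (𝔽.mono (Nat.zero_le j)))) intU]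
  have hterm_lt : ∀ k, k < j → P[T k|𝔽 j] =ᵐ[P] T k := by
    intro k hk
    have hmeas : StronglyMeasurable[𝔽 j] (T k) := by
      refine StronglyMeasurable.mul ((hφ k).mono ((hle k).trans (𝔽.mono hk.le))) ?_
      exact ((hM.1 (k + 1)).mono (𝔽.mono hk)).sub
        ((hM.1 k).mono (𝔽.mono hk.le))
    rw [condExp_of_stronglyMeasurable (𝔽.le j) hmeas (intT k)]
  have hterm_ge : ∀ k, j ≤ k → P[T k|𝔽 j] =ᵐ[P] 0 := by
    intro k hk
    have htower : P[T k|𝔽 j] =ᵐ[P] P[P[T k|𝔽 k]|𝔽 j] :=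
      (condExp_condExp_of_le (𝔽.mono hk) (𝔽.le k)).symm
    have hpull : P[T k|𝔽 k] =ᵐ[P]
        (fun ω => φ k ω) * P[fun ω => M (k + 1) ω - M k ω|𝔽 k] := by
      have := condExp_mul_of_stronglyMeasurable_left ((hφ k).mono (hle k))
        (by exact intT k)
        (((hM2 (k + 1)).sub (hM2 k)).integrable one_le_two)
      exact this
    have hΔ : P[fun ω => M (k + 1) ω - M k ω|𝔽 k] =ᵐ[P] 0 := by
      have h1 : P[fun ω => M (k + 1) ω - M k ω|𝔽 k] =ᵐ[P]
          P[M (k + 1)|𝔽 k] - P[M k|𝔽 k] :=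
        condExp_sub (hM.integrable (k + 1)) (hM.integrable k) (𝔽 k)
      have h2 : P[M (k + 1)|𝔽 k] =ᵐ[P] M k := hM.condExp_ae_eq (Nat.le_succ k)
      have h3 : P[M k|𝔽 k] =ᵐ[P] M k := hM.condExp_ae_eq le_rfl
      filter_upwards [h1, h2, h3] with ω e1 e2 e3
      simp [e1, Pi.sub_apply, e2, e3]
    have hzero : P[T k|𝔽 k] =ᵐ[P] 0 := by
      filter_upwards [hpull, hΔ] with ω e1 e2
      simp [e1, Pi.mul_apply, e2]
    calc P[T k|𝔽 j] =ᵐ[P] P[P[T k|𝔽 k]|𝔽 j] := htower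
      _ =ᵐ[P] P[(0 : Ω → ℝ)|𝔽 j] := condExp_congr_ae hzero
      _ =ᵐ[P] 0 := by rw [condExp_zero]
  have hterms : ∀ᵐ ω ∂P, ∀ k, k < N →
      (P[T k|𝔽 j]) ω = if k < j then T k ω else 0 := by
    rw [ae_all_iff]
    intro k
    by_cases hk : k < j
    · filter_upwards [hterm_lt k hk] with ω e _; simp [hk, e]
    · filter_upwards [hterm_ge k (not_lt.1 hk)] with ω e _; simpa [hk] using e
  have hsplit : (fun ω => U₀ ω + ∑ k ∈ range N, T k ω) = U₀ + ∑ k ∈ range N, T k := by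
    funext ω; simp [Finset.sum_apply]
  rw [hsplit]
  have hfilter : (range N).filter (fun k => k < j) = range (min j N) := by
    ext x; simp [Nat.lt_min, and_comm]
  filter_upwards [hadd, hsum, hU0, hterms] with ω e1 e2 e3 e4
  calc (P[U₀ + ∑ k ∈ range N, T k|𝔽 j]) ω
      = (P[U₀|𝔽 j]) ω + (P[∑ k ∈ range N, T k|𝔽 j]) ω := e1
    _ = U₀ ω + ∑ k ∈ range N, (P[T k|𝔽 j]) ω := by rw [e3, e2]; simp [Finset.sum_apply]
    _ = U₀ ω + ∑ k ∈ range N, (if k < j then T k ω else 0) := by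
        rw [Finset.sum_congr rfl (fun k hk => e4 k (Finset.mem_range.1 hk))]
    _ = U₀ ω + ∑ k ∈ range (min j N), T k ω := by rw [← Finset.sum_filter, hfilter]

end AuxLemmas

/-- The set `L^H` of elements of `L²` of the form `U₀ + Σ_{k<N} φ_k ΔM_k` with `U₀`
square-integrable `ℍ 0`-measurable and `φ` an admissible `ℍ`-predictable process is a
closed linear subspace of `L²`. -/
theorem stmt_8 {Ω : Type*} {mΩ : MeasurableSpace Ω} {P : Measure Ω} [IsProbabilityMeasure P]
    (N : ℕ) (𝔽 ℍ : Filtration ℕ mΩ) (hle : ∀ k, ℍ k ≤ 𝔽 k)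
    (M : ℕ → Ω → ℝ) (hM : Martingale M 𝔽 P) (hM2 : ∀ k, MemLp (M k) 2 P) :
    ∃ S : Submodule ℝ (Lp ℝ 2 P),
      IsClosed (S : Set (Lp ℝ 2 P)) ∧
      (S : Set (Lp ℝ 2 P)) =
        { f : Lp ℝ 2 P | ∃ (U₀ : Ω → ℝ) (φ : ℕ → Ω → ℝ),
            MemLp U₀ 2 P ∧ StronglyMeasurable[ℍ 0] U₀ ∧
            (∀ k, StronglyMeasurable[ℍ k] (φ k)) ∧
            (∀ k, MemLp (fun ω => φ k ω * (M (k + 1) ω - M k ω)) 2 P) ∧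
            (f : Ω → ℝ) =ᵐ[P]
              fun ω => U₀ ω + ∑ k ∈ Finset.range N, φ k ω * (M (k + 1) ω - M k ω) } := by
  classical
  set Δ : ℕ → Ω → ℝ := fun k ω => M (k + 1) ω - M k ω with hΔdef
  set LH : Set (Lp ℝ 2 P) :=
    { f : Lp ℝ 2 P | ∃ (U₀ : Ω → ℝ) (φ : ℕ → Ω → ℝ),
        MemLp U₀ 2 P ∧ StronglyMeasurable[ℍ 0] U₀ ∧
        (∀ k, StronglyMeasurable[ℍ k] (φ k)) ∧
        (∀ k, MemLp (fun ω => φ k ω * (M (k + 1) ω - M k ω)) 2 P) ∧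
        (f : Ω → ℝ) =ᵐ[P]
          fun ω => U₀ ω + ∑ k ∈ Finset.range N, φ k ω * (M (k + 1) ω - M k ω) } with hLH
  have zero_mem : (0 : Lp ℝ 2 P) ∈ LH := by
    refine ⟨fun _ => 0, fun _ _ => 0, memLp_const 0, stronglyMeasurable_const,
      fun k => stronglyMeasurable_const, fun k => by simpa using memLp_const (0 : ℝ), ?_⟩
    filter_upwards [Lp.coeFn_zero ℝ 2 P] with ω e
    simp [e]
  have add_mem : ∀ a b : Lp ℝ 2 P, a ∈ LH → b ∈ LH → a + b ∈ LH := by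
    rintro a b ⟨U, φ, hU, hUm, hφ, hφM, ha⟩ ⟨V, ψ, hV, hVm, hψ, hψM, hb⟩
    refine ⟨fun ω => U ω + V ω, fun k ω => φ k ω + ψ k ω, hU.add hV, hUm.add hVm,
      fun k => (hφ k).add (hψ k), fun k => ?_, ?_⟩
    · have := (hφM k).add (hψM k)
      simp only [add_mul]; exact this
    · filter_upwards [Lp.coeFn_add a b, ha, hb] with ω e1 e2 e3
      simp only [Pi.add_apply] at e1
      rw [e1, e2, e3]
      simp [add_mul, Finset.sum_add_distrib]
      ring
  have smul_mem : ∀ (c : ℝ) (a : Lp ℝ 2 P), a ∈ LH → c • a ∈ LH := by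
    rintro c a ⟨U, φ, hU, hUm, hφ, hφM, ha⟩
    refine ⟨fun ω => c * U ω, fun k ω => c * φ k ω, hU.const_mul c, hUm.const_mul c,
      fun k => (hφ k).const_mul c, fun k => ?_, ?_⟩
    · have := (hφM k).const_mul c
      simpa [mul_assoc] using this
    · filter_upwards [Lp.coeFn_smul c a, ha] with ω e1 e2
      rw [e1]
      simp only [Pi.smul_apply, smul_eq_mul, e2, mul_add, Finset.mul_sum, mul_assoc]
  -- sequential closedness
  have hclosed : IsSeqClosed LH := by
    intro F f hmem hlim
    choose U φ hU hUm hφ hφM hrep using hmem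
    -- L² convergence of the coercions
    have h2 : Tendsto (fun n => eLpNorm ((F n : Ω → ℝ) - (f : Ω → ℝ)) 2 P) atTop (𝓝 0) :=
      (Lp.tendsto_Lp_iff_tendsto_eLpNorm' F f).mp hlim
    -- L¹ convergence
    have h1 : Tendsto (fun n => eLpNorm ((F n : Ω → ℝ) - (f : Ω → ℝ)) 1 P) atTop (𝓝 0) := by
      refine tendsto_of_tendsto_of_tendsto_of_le_of_le tendsto_const_nhds h2
        (fun n => zero_le) (fun n => ?_)
      exact eLpNorm_le_eLpNorm_of_exponent_le one_le_two
        ((Lp.aestronglyMeasurable (F n)).sub (Lp.aestronglyMeasurable f))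
    -- L¹ convergence of conditional expectations
    have hcond : ∀ j : ℕ, Tendsto (fun n =>
        eLpNorm (P[(F n : Ω → ℝ)|𝔽 j] - P[(f : Ω → ℝ)|𝔽 j]) 1 P) atTop (𝓝 0) := by
      intro j
      refine tendsto_of_tendsto_of_tendsto_of_le_of_le tendsto_const_nhds h1
        (fun n => zero_le) (fun n => ?_)
      have e1 : P[(F n : Ω → ℝ)|𝔽 j] - P[(f : Ω → ℝ)|𝔽 j]
          =ᵐ[P] P[(F n : Ω → ℝ) - (f : Ω → ℝ)|𝔽 j] :=
        (condExp_sub ((Lp.memLp (F n)).integrable one_le_two)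
          ((Lp.memLp f).integrable one_le_two) (𝔽 j)).symm
      rw [eLpNorm_congr_ae e1]
      exact eLpNorm_one_condExp_le_eLpNorm _
    -- identification of the conditional expectations of the F n
    have hrepc : ∀ n j, P[(F n : Ω → ℝ)|𝔽 j] =ᵐ[P]
        fun ω => U n ω + ∑ k ∈ range (min j N), φ n k ω * Δ k ω := fun n j =>
      (condExp_congr_ae (hrep n)).trans
        (aux_condExp_rep N 𝔽 ℍ hle M hM hM2 (U n) (φ n) (hU n) (hUm n) (hφ n) (hφM n) j)
    set D : ℕ → Ω → ℝ := fun j => P[(f : Ω → ℝ)|𝔽 j] with hD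
    have hDm : ∀ j, AEStronglyMeasurable (D j) P := fun j =>
      (stronglyMeasurable_condExp.mono (𝔽.le j)).aestronglyMeasurable
    have hDℒ : ∀ j, MemLp (D j) 2 P := fun j => aux_memℒp_condexp (𝔽.le j) (Lp.memLp f)
    -- the U₀ component
    have hU0n : ∀ n, P[(F n : Ω → ℝ)|𝔽 0] =ᵐ[P] U n := by
      intro n
      have h := hrepc n 0
      simpa [Nat.min_eq_left (Nat.zero_le N)] using h
    have hUconv : Tendsto (fun n => eLpNorm ((fun ω => U n ω) - D 0) 1 P) atTop (𝓝 0) := by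
      have : (fun n => eLpNorm ((fun ω => U n ω) - D 0) 1 P)
          = fun n => eLpNorm (P[(F n : Ω → ℝ)|𝔽 0] - P[(f : Ω → ℝ)|𝔽 0]) 1 P := by
        funext n
        exact eLpNorm_congr_ae ((hU0n n).symm.sub (EventuallyEq.refl _ _))
      rw [this]
      exact hcond 0
    obtain ⟨ns0, _, hns0⟩ := (tendstoInMeasure_of_tendsto_eLpNorm (p := 1) one_ne_zero
      (fun n => ((hUm n).mono ((hle 0).trans (𝔽.le 0))).aestronglyMeasurable)
      (hDm 0) hUconv).exists_seq_tendsto_ae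
    obtain ⟨Ulim, hUlimm, hUlim⟩ := aux_lim_mul (m := ℍ 0) (fun i => U (ns0 i))
      (fun i => hUm (ns0 i)) (fun _ => 1) (D 0) (by
        filter_upwards [hns0] with ω e
        simpa [mul_one] using e)
    have hUlimeq : Ulim =ᵐ[P] D 0 := by
      filter_upwards [hUlim] with ω e
      simpa [mul_one] using e
    -- the k-th components, k < N
    have hcomp : ∀ k, k < N → ∃ ψk : Ω → ℝ, StronglyMeasurable[ℍ k] ψk ∧
        (fun ω => ψk ω * Δ k ω) =ᵐ[P] fun ω => D (k + 1) ω - D k ω := by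
      intro k hk
      have hTkn : ∀ n, (fun ω => φ n k ω * Δ k ω) =ᵐ[P]
          P[(F n : Ω → ℝ)|𝔽 (k + 1)] - P[(F n : Ω → ℝ)|𝔽 k] := by
        intro n
        have e1 := hrepc n (k + 1)
        have e2 := hrepc n k
        rw [Nat.min_eq_left hk] at e1
        rw [Nat.min_eq_left hk.le] at e2
        filter_upwards [e1, e2] with ω f1 f2
        simp only [Pi.sub_apply, f1, f2, Finset.sum_range_succ]
        ring
      have hconvk : Tendsto (fun n =>
          eLpNorm ((fun ω => φ n k ω * Δ k ω) - fun ω => D (k + 1) ω - D k ω) 1 P)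
          atTop (𝓝 0) := by
        have hbd : ∀ n, eLpNorm ((fun ω => φ n k ω * Δ k ω) - fun ω => D (k + 1) ω - D k ω) 1 P
            ≤ eLpNorm (P[(F n : Ω → ℝ)|𝔽 (k + 1)] - P[(f : Ω → ℝ)|𝔽 (k + 1)]) 1 P
              + eLpNorm (P[(F n : Ω → ℝ)|𝔽 k] - P[(f : Ω → ℝ)|𝔽 k]) 1 P := by
          intro n
          have e3 : ((fun ω => φ n k ω * Δ k ω) - fun ω => D (k + 1) ω - D k ω) =ᵐ[P]
              (P[(F n : Ω → ℝ)|𝔽 (k + 1)] - P[(f : Ω → ℝ)|𝔽 (k + 1)])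
                - (P[(F n : Ω → ℝ)|𝔽 k] - P[(f : Ω → ℝ)|𝔽 k]) := by
            filter_upwards [hTkn n] with ω e
            simp only [Pi.sub_apply] at e ⊢
            rw [e]
            simp [hD]
            ring
          rw [eLpNorm_congr_ae e3]
          exact eLpNorm_sub_le
            ((stronglyMeasurable_condExp.mono (𝔽.le (k + 1))).aestronglyMeasurable.sub
              (stronglyMeasurable_condExp.mono (𝔽.le (k + 1))).aestronglyMeasurable)
            ((stronglyMeasurable_condExp.mono (𝔽.le k)).aestronglyMeasurable.sub
              (stronglyMeasurable_condExp.mono (𝔽.le k)).aestronglyMeasurable) le_rfl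
        have hsum0 : Tendsto (fun n =>
            eLpNorm (P[(F n : Ω → ℝ)|𝔽 (k + 1)] - P[(f : Ω → ℝ)|𝔽 (k + 1)]) 1 P
              + eLpNorm (P[(F n : Ω → ℝ)|𝔽 k] - P[(f : Ω → ℝ)|𝔽 k]) 1 P) atTop (𝓝 0) := by
          have := (hcond (k + 1)).add (hcond k)
          simpa using this
        exact tendsto_of_tendsto_of_tendsto_of_le_of_le tendsto_const_nhds hsum0
          (fun n => zero_le) hbd
      obtain ⟨ns, _, hns⟩ := (tendstoInMeasure_of_tendsto_eLpNorm (p := 1) one_ne_zero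
        (fun n => (hφM n k).aestronglyMeasurable)
        ((hDℒ (k + 1)).sub (hDℒ k)).aestronglyMeasurable hconvk).exists_seq_tendsto_ae
      exact aux_lim_mul (m := ℍ k) (fun i => φ (ns i) k) (fun i => hφ (ns i) k)
        (Δ k) (fun ω => D (k + 1) ω - D k ω) hns
    choose! ψ hψm hψeq using hcomp
    set philim : ℕ → Ω → ℝ := fun k => if k < N then ψ k else fun _ => 0 with hphilim
    -- f agrees a.e. with its conditional expectation at time N
    have hfN : (f : Ω → ℝ) =ᵐ[P] D N := by
      have hFn : ∀ n, (F n : Ω → ℝ) =ᵐ[P] P[(F n : Ω → ℝ)|𝔽 N] := by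
        intro n
        refine (hrep n).trans ?_
        have h := hrepc n N
        simpa [min_self] using h.symm
      have hbd : ∀ n, eLpNorm ((f : Ω → ℝ) - D N) 1 P
          ≤ eLpNorm ((F n : Ω → ℝ) - (f : Ω → ℝ)) 1 P
            + eLpNorm (P[(F n : Ω → ℝ)|𝔽 N] - P[(f : Ω → ℝ)|𝔽 N]) 1 P := by
        intro n
        have e3 : ((f : Ω → ℝ) - D N) =ᵐ[P]
            (0 : Ω → ℝ) - (((F n : Ω → ℝ) - (f : Ω → ℝ))
              - (P[(F n : Ω → ℝ)|𝔽 N] - P[(f : Ω → ℝ)|𝔽 N])) := by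
          filter_upwards [hFn n] with ω e
          simp only [Pi.sub_apply, Pi.zero_apply, hD] at e ⊢
          rw [← e]
          ring
        rw [eLpNorm_congr_ae e3]
        calc eLpNorm ((0 : Ω → ℝ) - (((F n : Ω → ℝ) - (f : Ω → ℝ))
              - (P[(F n : Ω → ℝ)|𝔽 N] - P[(f : Ω → ℝ)|𝔽 N]))) 1 P
            = eLpNorm (((F n : Ω → ℝ) - (f : Ω → ℝ))
              - (P[(F n : Ω → ℝ)|𝔽 N] - P[(f : Ω → ℝ)|𝔽 N])) 1 P := by
              rw [zero_sub, eLpNorm_neg]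
          _ ≤ _ := eLpNorm_sub_le
              ((Lp.aestronglyMeasurable (F n)).sub (Lp.aestronglyMeasurable f))
              ((stronglyMeasurable_condExp.mono (𝔽.le N)).aestronglyMeasurable.sub
                (stronglyMeasurable_condExp.mono (𝔽.le N)).aestronglyMeasurable) le_rfl
      have hlim0 : Tendsto (fun n => eLpNorm ((F n : Ω → ℝ) - (f : Ω → ℝ)) 1 P
          + eLpNorm (P[(F n : Ω → ℝ)|𝔽 N] - P[(f : Ω → ℝ)|𝔽 N]) 1 P) atTop (𝓝 0) := by
        have := h1.add (hcond N)
        simpa using this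
      have hzero : eLpNorm ((f : Ω → ℝ) - D N) 1 P = 0 := by
        have hle0 : eLpNorm ((f : Ω → ℝ) - D N) 1 P ≤ 0 := ge_of_tendsto' hlim0 hbd
        exact le_antisymm hle0 zero_le
      have := (eLpNorm_eq_zero_iff ((Lp.aestronglyMeasurable f).sub (hDm N))
        one_ne_zero).mp hzero
      filter_upwards [this] with ω e
      have : (f : Ω → ℝ) ω - D N ω = 0 := by simpa using e
      linarith
    -- assemble
    refine ⟨Ulim, philim, (hDℒ 0).ae_eq hUlimeq.symm, hUlimm, ?_, ?_, ?_⟩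
    · intro k
      by_cases hk : k < N
      · simpa [hphilim, hk] using hψm k hk
      · simpa [hphilim, hk] using (stronglyMeasurable_const : StronglyMeasurable[ℍ k] fun _ => (0:ℝ))
    · intro k
      by_cases hk : k < N
      · refine (((hDℒ (k + 1)).sub (hDℒ k)).ae_eq ?_)
        have := (hψeq k hk).symm
        filter_upwards [this] with ω e
        simp [hphilim, hk, ← e]
        exact e
      · simp only [hphilim, hk, if_false]
        simpa using memLp_const (0 : ℝ)
    · have hψall : ∀ᵐ ω ∂P, ∀ k, k < N → ψ k ω * Δ k ω = D (k + 1) ω - D k ω := by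
        rw [ae_all_iff]
        intro k
        by_cases hk : k < N
        · filter_upwards [hψeq k hk] with ω e _; exact e
        · filter_upwards with ω hk'; exact absurd hk' hk
      filter_upwards [hfN, hUlimeq, hψall] with ω e1 e2 e3
      rw [e1]
      have htel : ∑ k ∈ range N, (D (k + 1) ω - D k ω) = D N ω - D 0 ω :=
        Finset.sum_range_sub (fun k => D k ω) N
      have hsum : ∑ k ∈ range N, philim k ω * Δ k ω = ∑ k ∈ range N, (D (k + 1) ω - D k ω) := by
        refine Finset.sum_congr rfl fun k hk => ?_
        have hkN := Finset.mem_range.1 hk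
        simp only [hphilim, if_pos hkN]
        exact e3 k hkN
      rw [hsum, htel, e2]
      ring
  refine ⟨{ carrier := LH,
            add_mem' := fun {a} {b} ha hb => add_mem a b ha hb,
            zero_mem' := zero_mem,
            smul_mem' := fun c a ha => smul_mem c a ha }, ?_, rfl⟩
  exact hclosed.isClosed
end

section
/- For every square-integrable random variable ξ there exist: a square-integrable H_0-measurable U_0; an admissible ℍ-predictable process H^H = (H^H_k); and a square-integrable random variable O_N with E[O_N·η] = 0 for every η ∈ L^H, such that ξ = U_0 + Σ_{k=0}^{N−1} H^H_k·ΔM_k + O_N P-almost surely. Moreover U_0 = E[ξ | H_0] P-a.s., E[O_N | H_0] = 0 P-a.s., and the decomposition is unique in the sense that for any two such decompositions the terms U_0, the sums Σ_{k=0}^{N−1} H^H_k·ΔM_k, and the terms O_N agree P-almost surely. -/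
open MeasureTheory Filter Topology Finset

set_option synthInstance.maxHeartbeats 1000000
set_option maxHeartbeats 1000000
set_option linter.unusedSectionVars false

/-- `GKWDecomp P ℍ M N ξ U₀ ON Hh` says that `(U₀, Hh, ON)` is a
Galtchouk–Kunita–Watanabe decomposition of `ξ` under the partial information `ℍ`:
`U₀` is square-integrable and `ℍ 0`-measurable, `Hh` is an admissible `ℍ`-predictable
process, `ON` is square-integrable and orthogonal in `L²` to every element of `L^H`
(i.e. to every `V₀ + Σ_{k<N} φ_k ΔM_k` with `V₀` square-integrable `ℍ 0`-measurable and
`φ` admissible `ℍ`-predictable), and `ξ = U₀ + Σ_{k<N} Hh_k ΔM_k + ON` a.s. -/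
def GKWDecomp {Ω : Type*} {mΩ : MeasurableSpace Ω} (P : Measure Ω)
    (ℍ : Filtration ℕ mΩ) (M : ℕ → Ω → ℝ) (N : ℕ)
    (ξ U₀ ON : Ω → ℝ) (Hh : ℕ → Ω → ℝ) : Prop :=
  MemLp U₀ 2 P ∧ StronglyMeasurable[ℍ 0] U₀ ∧
  (∀ k, StronglyMeasurable[ℍ k] (Hh k)) ∧
  (∀ k, MemLp (fun ω => Hh k ω * (M (k + 1) ω - M k ω)) 2 P) ∧
  MemLp ON 2 P ∧
  (∀ (V₀ : Ω → ℝ) (φ : ℕ → Ω → ℝ), MemLp V₀ 2 P → StronglyMeasurable[ℍ 0] V₀ →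
    (∀ k, StronglyMeasurable[ℍ k] (φ k)) →
    (∀ k, MemLp (fun ω => φ k ω * (M (k + 1) ω - M k ω)) 2 P) →
    ∫ ω, ON ω * (V₀ ω + ∑ k ∈ Finset.range N, φ k ω * (M (k + 1) ω - M k ω)) ∂P = 0) ∧
  (ξ =ᵐ[P] fun ω =>
    U₀ ω + (∑ k ∈ Finset.range N, Hh k ω * (M (k + 1) ω - M k ω)) + ON ω)

section meas_helpers

variable {α : Type*}

lemma measurableSet_exists_tendsto' {m : MeasurableSpace α} {f : ℕ → α → ℝ}
    (hf : ∀ i, Measurable[m] (f i)) :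
    MeasurableSet[m] {x | ∃ c, Tendsto (fun n => f n x) atTop (𝓝 c)} :=
  measurableSet_exists_tendsto hf

lemma measurable_of_tendsto' {m : MeasurableSpace α} {f : ℕ → α → ℝ} {g : α → ℝ}
    (hf : ∀ i, Measurable[m] (f i)) (h : ∀ x, Tendsto (fun n => f n x) atTop (𝓝 (g x))) :
    Measurable[m] g :=
  measurable_of_tendsto_metrizable hf (tendsto_pi_nhds.mpr h)

end meas_helpers

section helpers

variable {Ω : Type*} {mΩ : MeasurableSpace Ω} {P : Measure Ω} [IsProbabilityMeasure P]

lemma memL2_mul_integrable {f g : Ω → ℝ} (hf : MemLp f 2 P) (hg : MemLp g 2 P) :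
    Integrable (fun ω => f ω * g ω) P := by
  have h : MemLp (f • g) 1 P := hg.smul hf
  exact memLp_one_iff_integrable.mp h

lemma condexp_incr_mul_zero (𝔽 : Filtration ℕ mΩ)
    (M : ℕ → Ω → ℝ) (hM : Martingale M 𝔽 P) (k : ℕ) {φ : Ω → ℝ}
    (hφ : StronglyMeasurable[𝔽 k] φ)
    (hφM : Integrable (fun ω => φ ω * (M (k + 1) ω - M k ω)) P) :
    P[(fun ω => φ ω * (M (k + 1) ω - M k ω)) | 𝔽 k] =ᵐ[P] 0 := by
  set g : Ω → ℝ := fun ω => M (k + 1) ω - M k ω with hgdef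
  have hg : Integrable g P := (hM.integrable (k + 1)).sub (hM.integrable k)
  have h0 : P[g | 𝔽 k] =ᵐ[P] 0 := by
    have h1 : P[g | 𝔽 k] =ᵐ[P] P[M (k+1)|𝔽 k] - P[M k|𝔽 k] :=
      condExp_sub (hM.integrable (k + 1)) (hM.integrable k) _
    have h2 : P[M (k+1)|𝔽 k] =ᵐ[P] M k := hM.condExp_ae_eq (Nat.le_succ k)
    have h3 : P[M k|𝔽 k] = M k :=
      condExp_of_stronglyMeasurable (𝔽.le k) (hM.stronglyAdapted k) (hM.integrable k)
    filter_upwards [h1, h2] with ω hω1 hω2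
    simp only [Pi.sub_apply, h3] at hω1
    simp [hω1, hω2]
  have hpull : P[φ * g | 𝔽 k] =ᵐ[P] φ * P[g | 𝔽 k] :=
    condExp_mul_of_stronglyMeasurable_left hφ hφM hg
  refine hpull.trans ?_
  filter_upwards [h0] with ω hω
  simp [hω]

lemma condexpH0_incr_zero (𝔽 ℍ : Filtration ℕ mΩ) (hle : ∀ k, ℍ k ≤ 𝔽 k)
    (M : ℕ → Ω → ℝ) (hM : Martingale M 𝔽 P) (k : ℕ) {φ : Ω → ℝ}
    (hφ : StronglyMeasurable[ℍ k] φ)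
    (hφM : Integrable (fun ω => φ ω * (M (k + 1) ω - M k ω)) P) :
    P[(fun ω => φ ω * (M (k + 1) ω - M k ω)) | ℍ 0] =ᵐ[P] 0 := by
  have hle0k : ℍ 0 ≤ 𝔽 k := (ℍ.mono (Nat.zero_le k)).trans (hle k)
  have htower := condExp_condExp_of_le (μ := P)
    (f := fun ω => φ ω * (M (k + 1) ω - M k ω)) hle0k (𝔽.le k)
  refine htower.symm.trans ?_
  have hinner := condexp_incr_mul_zero 𝔽 M hM k (hφ.mono (hle k)) hφM
  refine (condExp_congr_ae hinner).trans ?_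
  simp [condExp_zero]

lemma condexpH0_sum_zero (𝔽 ℍ : Filtration ℕ mΩ) (hle : ∀ k, ℍ k ≤ 𝔽 k)
    (M : ℕ → Ω → ℝ) (hM : Martingale M 𝔽 P) (N : ℕ) {φ : ℕ → Ω → ℝ}
    (hφ : ∀ k, StronglyMeasurable[ℍ k] (φ k))
    (hφM : ∀ k, MemLp (fun ω => φ k ω * (M (k + 1) ω - M k ω)) 2 P) :
    P[(fun ω => ∑ k ∈ Finset.range N, φ k ω * (M (k + 1) ω - M k ω)) | ℍ 0] =ᵐ[P] 0 := by
  have hint : ∀ k, Integrable (fun ω => φ k ω * (M (k + 1) ω - M k ω)) P :=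
    fun k => (hφM k).integrable one_le_two
  have hsum : P[(fun ω => ∑ k ∈ Finset.range N, φ k ω * (M (k + 1) ω - M k ω)) | ℍ 0]
      =ᵐ[P] ∑ k ∈ Finset.range N, P[(fun ω => φ k ω * (M (k + 1) ω - M k ω)) | ℍ 0] := by
    have h := condExp_finset_sum (μ := P) (m := ℍ 0)
      (f := fun k => fun ω => φ k ω * (M (k + 1) ω - M k ω)) (s := Finset.range N)
      (fun k _ => hint k)
    refine EventuallyEq.trans ?_ h
    refine condExp_congr_ae (Eventually.of_forall fun ω => ?_)
    simp [Finset.sum_apply]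
  refine hsum.trans ?_
  have h0 : ∀ k ∈ Finset.range N,
      P[(fun ω => φ k ω * (M (k + 1) ω - M k ω)) | ℍ 0] =ᵐ[P] 0 :=
    fun k _ => condexpH0_incr_zero 𝔽 ℍ hle M hM k (hφ k) (hint k)
  have hall : ∀ᵐ ω ∂P, ∀ k ∈ Finset.range N,
      (P[(fun ω => φ k ω * (M (k + 1) ω - M k ω)) | ℍ 0]) ω = 0 :=
    (ae_ball_iff (Finset.range N).countable_toSet).mpr fun k hk => h0 k hk
  filter_upwards [hall] with ω h
  simp only [Finset.sum_apply, Pi.zero_apply]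
  exact Finset.sum_eq_zero h

lemma integral_mul_incr_zero (𝔽 : Filtration ℕ mΩ)
    (M : ℕ → Ω → ℝ) (hM : Martingale M 𝔽 P) (k : ℕ)
    {X φ : Ω → ℝ} (hXm : StronglyMeasurable[𝔽 k] X) (hX2 : MemLp X 2 P)
    (hφ : StronglyMeasurable[𝔽 k] φ)
    (hφM : MemLp (fun ω => φ ω * (M (k + 1) ω - M k ω)) 2 P) :
    ∫ ω, X ω * (φ ω * (M (k + 1) ω - M k ω)) ∂P = 0 := by
  have hint : Integrable (fun ω => (X ω * φ ω) * (M (k + 1) ω - M k ω)) P := by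
    have h := memL2_mul_integrable hX2 hφM
    exact h.congr (Eventually.of_forall fun ω => by ring)
  have hcond := condexp_incr_mul_zero 𝔽 M hM k (hXm.mul hφ) hint
  have : ∫ ω, (X ω * φ ω) * (M (k + 1) ω - M k ω) ∂P = 0 := by
    have h1 := integral_condExp (μ := P) (f := fun ω => (X * φ) ω * (M (k + 1) ω - M k ω)) (𝔽.le k)
    have h2 : ∫ ω, (P[fun ω => (X * φ) ω * (M (k + 1) ω - M k ω)|𝔽 k]) ω ∂P = 0 := by
      rw [integral_congr_ae hcond]; simp
    simp only [Pi.mul_apply] at h1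
    rw [← h1]; exact h2
  rw [← this]
  exact integral_congr_ae (Eventually.of_forall fun ω => by ring)

lemma isClosed_sup_of_orthogonal {E : Type*} [NormedAddCommGroup E] [InnerProductSpace ℝ E]
    [CompleteSpace E] {A B : Submodule ℝ E} (hA : IsClosed (A : Set E))
    (hB : IsClosed (B : Set E)) (hAB : B ≤ Aᗮ) :
    IsClosed ((A ⊔ B : Submodule ℝ E) : Set E) := by
  haveI : CompleteSpace A := hA.completeSpace_coe
  refine IsSeqClosed.isClosed ?_
  intro u x hu hux
  choose a ha b hb hab using fun n => Submodule.mem_sup.mp (hu n)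
  have hpa : ∀ n, ((A.orthogonalProjectionOnto (u n) : A) : E) = a n := by
    intro n
    rw [← hab n, map_add]
    push_cast
    rw [show ((A.orthogonalProjectionOnto (a n) : A) : E) = a n from
        congrArg Subtype.val (A.orthogonalProjectionOnto_mem_subspace_eq_self ⟨a n, ha n⟩),
      Submodule.orthogonalProjectionOnto_apply_of_mem_orthogonal (hAB (hb n))]
    simp
  have hta : Tendsto (fun n => ((A.orthogonalProjectionOnto (u n) : A) : E)) atTop
      (𝓝 ((A.orthogonalProjectionOnto x : A) : E)) :=
    (continuous_subtype_val.tendsto _).comp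
      (((A.orthogonalProjectionOnto).continuous.tendsto x).comp hux)
  have hta' : Tendsto a atTop (𝓝 ((A.orthogonalProjectionOnto x : A) : E)) := by
    refine hta.congr fun n => hpa n
  have htb : Tendsto b atTop (𝓝 (x - ((A.orthogonalProjectionOnto x : A) : E))) :=
    (hux.sub hta').congr fun n => (eq_sub_of_add_eq' (hab n)).symm
  have hxb : x - ((A.orthogonalProjectionOnto x : A) : E) ∈ B :=
    hB.mem_of_tendsto htb (Eventually.of_forall hb)
  have hx : x = ((A.orthogonalProjectionOnto x : A) : E)
      + (x - ((A.orthogonalProjectionOnto x : A) : E)) := by abel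
  rw [SetLike.mem_coe, hx]
  exact Submodule.add_mem_sup (A.orthogonalProjectionOnto x).2 hxb

variable (P) in
/-- Stochastic-integral increments subspace. -/
noncomputable def Ssub (ℍ : Filtration ℕ mΩ) (M : ℕ → Ω → ℝ) (j : ℕ) : Submodule ℝ (Lp ℝ 2 P) where
  carrier := {f | ∃ φ : Ω → ℝ, StronglyMeasurable[ℍ j] φ ∧
      MemLp (fun ω => φ ω * (M (j + 1) ω - M j ω)) 2 P ∧
      (f : Ω → ℝ) =ᵐ[P] fun ω => φ ω * (M (j + 1) ω - M j ω)}
  add_mem' := by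
    rintro f g ⟨φ, hφm, hφ2, hφe⟩ ⟨ψ, hψm, hψ2, hψe⟩
    refine ⟨fun ω => φ ω + ψ ω, hφm.add hψm, ?_, ?_⟩
    · exact (hφ2.add hψ2).ae_eq (Eventually.of_forall fun ω => by
        simp only [Pi.add_apply]; ring)
    · filter_upwards [Lp.coeFn_add f g, hφe, hψe] with ω h1 h2 h3
      simp only [h1, Pi.add_apply, h2, h3]; ring
  zero_mem' := by
    refine ⟨fun _ => 0, stronglyMeasurable_const, ?_, ?_⟩
    · simpa using memLp_const (0 : ℝ) (μ := P)
    · filter_upwards [Lp.coeFn_zero (E := ℝ) (p := 2) (μ := P)] with ω h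
      simp [h]
  smul_mem' := by
    rintro c f ⟨φ, hφm, hφ2, hφe⟩
    refine ⟨fun ω => c * φ ω, hφm.const_mul c, ?_, ?_⟩
    · exact (hφ2.const_mul c).ae_eq (Eventually.of_forall fun ω => by
        simp only; ring)
    · filter_upwards [Lp.coeFn_smul c f, hφe] with ω h1 h2
      simp only [h1, Pi.smul_apply, smul_eq_mul, h2]; ring

variable (P) in
/-- Partial sums of the `L^H` subspace. -/
noncomputable def Kpart (ℍ : Filtration ℕ mΩ) (M : ℕ → Ω → ℝ) : ℕ → Submodule ℝ (Lp ℝ 2 P)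
  | 0 => lpMeas ℝ ℝ (ℍ 0) 2 P
  | (j + 1) => Kpart ℍ M j ⊔ Ssub P ℍ M j

lemma mem_Kpart_iff (ℍ : Filtration ℕ mΩ) (M : ℕ → Ω → ℝ) (j : ℕ) (f : Lp ℝ 2 P) :
    f ∈ Kpart P ℍ M j ↔
    ∃ (U₀ : Ω → ℝ) (φ : ℕ → Ω → ℝ), MemLp U₀ 2 P ∧ StronglyMeasurable[ℍ 0] U₀ ∧
      (∀ k, StronglyMeasurable[ℍ k] (φ k)) ∧
      (∀ k, MemLp (fun ω => φ k ω * (M (k + 1) ω - M k ω)) 2 P) ∧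
      (f : Ω → ℝ) =ᵐ[P]
        fun ω => U₀ ω + ∑ k ∈ Finset.range j, φ k ω * (M (k + 1) ω - M k ω) := by
  classical
  induction j generalizing f with
  | zero =>
    constructor
    · intro hf
      obtain ⟨g, hgm, hge⟩ : AEStronglyMeasurable[ℍ 0] (f : Ω → ℝ) P := hf
      refine ⟨g, fun _ _ => 0, (Lp.memLp f).ae_eq hge, hgm,
        fun _ => stronglyMeasurable_const, fun k => ?_, ?_⟩
      · simpa using memLp_const (0 : ℝ) (μ := P)
      · filter_upwards [hge] with ω h; simp [h]
    · rintro ⟨U₀, φ, hU2, hUm, -, -, hfe⟩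
      refine ⟨U₀, hUm, ?_⟩
      filter_upwards [hfe] with ω h; simpa using h
  | succ j ih =>
    constructor
    · intro hf
      obtain ⟨y, hy, z, hz, hyz⟩ := Submodule.mem_sup.mp hf
      obtain ⟨U₀, φ, hU2, hUm, hφm, hφ2, hye⟩ := (ih y).mp hy
      obtain ⟨ψ, hψm, hψ2, hze⟩ := hz
      refine ⟨U₀, Function.update φ j ψ, hU2, hUm, ?_, ?_, ?_⟩
      · intro k
        rcases eq_or_ne k j with rfl | hk
        · simpa using hψm
        · simpa [Function.update_of_ne hk] using hφm k
      · intro k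
        rcases eq_or_ne k j with rfl | hk
        · simpa using hψ2
        · simpa [Function.update_of_ne hk] using hφ2 k
      · have hfyz : (f : Ω → ℝ) =ᵐ[P] (y : Ω → ℝ) + (z : Ω → ℝ) := by
          rw [← hyz]; exact Lp.coeFn_add y z
        filter_upwards [hfyz, hye, hze] with ω h1 h2 h3
        have hsum : ∑ k ∈ Finset.range (j + 1),
            Function.update φ j ψ k ω * (M (k + 1) ω - M k ω)
            = (∑ k ∈ Finset.range j, φ k ω * (M (k + 1) ω - M k ω))
              + ψ ω * (M (j + 1) ω - M j ω) := by
          rw [Finset.sum_range_succ, Function.update_self]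
          congr 1
          refine Finset.sum_congr rfl fun k hk => ?_
          rw [Function.update_of_ne (Nat.ne_of_lt (Finset.mem_range.mp hk))]
        simp only [h1, Pi.add_apply, h2, h3, hsum]
        ring
    · rintro ⟨U₀, φ, hU2, hUm, hφm, hφ2, hfe⟩
      have hy2 : MemLp (fun ω => U₀ ω + ∑ k ∈ Finset.range j,
          φ k ω * (M (k + 1) ω - M k ω)) 2 P := by
        refine MemLp.add hU2 ?_
        exact (memLp_finset_sum' (Finset.range j) (fun k _ => hφ2 k)).ae_eq
          (Eventually.of_forall fun ω => by simp [Finset.sum_apply])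
      refine Submodule.mem_sup.mpr ⟨hy2.toLp _, ?_, (hφ2 j).toLp _, ?_, ?_⟩
      · exact (ih _).mpr ⟨U₀, φ, hU2, hUm, hφm, hφ2, hy2.coeFn_toLp⟩
      · exact ⟨φ j, hφm j, hφ2 j, (hφ2 j).coeFn_toLp⟩
      · refine Lp.ext ?_
        filter_upwards [Lp.coeFn_add (hy2.toLp _) ((hφ2 j).toLp _), hy2.coeFn_toLp,
          (hφ2 j).coeFn_toLp, hfe] with ω h1 h2 h3 h4
        rw [h1]
        simp only [Pi.add_apply, h2, h3, h4, Finset.sum_range_succ]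
        ring

lemma isClosed_Ssub (ℍ : Filtration ℕ mΩ) (M : ℕ → Ω → ℝ) (j : ℕ) :
    IsClosed ((Ssub P ℍ M j : Submodule ℝ (Lp ℝ 2 P)) : Set (Lp ℝ 2 P)) := by
  classical
  refine IsSeqClosed.isClosed ?_
  intro u f hu huf
  choose φ hφm hφ2 hφe using hu
  have hmeas : TendstoInMeasure P (fun n => ((u n : Lp ℝ 2 P) : Ω → ℝ)) atTop f :=
    tendstoInMeasure_of_tendsto_Lp huf
  obtain ⟨ns, -, hae⟩ := hmeas.exists_seq_tendsto_ae
  set ψ : ℕ → Ω → ℝ := fun i => φ (ns i) with hψdef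
  have hψm : ∀ i, StronglyMeasurable[ℍ j] (ψ i) := fun i => hφm (ns i)
  have hae2 : ∀ᵐ ω ∂P,
      Tendsto (fun i => ψ i ω * (M (j + 1) ω - M j ω)) atTop (𝓝 ((f : Ω → ℝ) ω)) := by
    have h_all : ∀ᵐ ω ∂P, ∀ i, ((u (ns i) : Lp ℝ 2 P) : Ω → ℝ) ω
        = ψ i ω * (M (j + 1) ω - M j ω) := ae_all_iff.mpr fun i => hφe (ns i)
    filter_upwards [h_all, hae] with ω h1 h2
    exact h2.congr fun i => h1 i
  set C : Set Ω := {ω | ∃ c, Tendsto (fun i => ψ i ω) atTop (𝓝 c)} with hCdef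
  have hCm : MeasurableSet[ℍ j] C :=
    measurableSet_exists_tendsto' fun i => (hψm i).measurable
  set φl : Ω → ℝ := fun ω => if h : ω ∈ C then h.choose else 0 with hφldef
  have hφlm : StronglyMeasurable[ℍ j] φl := by
    have htend : ∀ ω, Tendsto (fun i => C.indicator (ψ i) ω) atTop (𝓝 (φl ω)) := by
      intro ω
      by_cases hω : ω ∈ C
      · simp only [hφldef, dif_pos hω]
        have := hω.choose_spec
        refine this.congr fun i => (Set.indicator_of_mem hω _).symm
      · simp only [hφldef, dif_neg hω]
        have : ∀ i, C.indicator (ψ i) ω = 0 := fun i => Set.indicator_of_notMem hω _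
        simp only [this]
        exact tendsto_const_nhds
    have hm : ∀ i, Measurable[ℍ j] (C.indicator (ψ i)) :=
      fun i => ((hψm i).measurable).indicator hCm
    exact (measurable_of_tendsto' hm htend).stronglyMeasurable
  have hfe : (f : Ω → ℝ) =ᵐ[P] fun ω => φl ω * (M (j + 1) ω - M j ω) := by
    filter_upwards [hae2] with ω h
    by_cases hω : ω ∈ C
    · have h1 : Tendsto (fun i => ψ i ω) atTop (𝓝 (φl ω)) := by
        simp only [hφldef, dif_pos hω]; exact hω.choose_spec
      exact tendsto_nhds_unique h (h1.mul_const _)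
    · by_cases hΔ : M (j + 1) ω - M j ω = 0
      · have h2 : Tendsto (fun i => ψ i ω * (M (j + 1) ω - M j ω)) atTop (𝓝 0) := by
          simp only [hΔ, mul_zero]; exact tendsto_const_nhds
        have := tendsto_nhds_unique h h2
        simp [this, hΔ]
      · exfalso
        refine hω ⟨(f : Ω → ℝ) ω / (M (j + 1) ω - M j ω), ?_⟩
        have h3 := h.div_const (M (j + 1) ω - M j ω)
        refine h3.congr fun i => ?_
        exact mul_div_cancel_right₀ _ hΔ
  exact ⟨φl, hφlm, (Lp.memLp f).ae_eq hfe, hfe⟩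

lemma L2_inner_eq_integral (f g : Lp ℝ 2 P) :
    (inner ℝ f g : ℝ) = ∫ ω, (f : Ω → ℝ) ω * (g : Ω → ℝ) ω ∂P := by
  rw [L2.inner_def]
  refine integral_congr_ae (Eventually.of_forall fun ω => ?_)
  simp [RCLike.inner_apply, starRingEnd_apply, mul_comm]

lemma Ssub_le_orthogonal (𝔽 ℍ : Filtration ℕ mΩ) (hle : ∀ k, ℍ k ≤ 𝔽 k)
    (M : ℕ → Ω → ℝ) (hM : Martingale M 𝔽 P) (j : ℕ) :
    Ssub P ℍ M j ≤ (Kpart P ℍ M j)ᗮ := by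
  rintro g ⟨ψ, hψm, hψ2, hψe⟩
  rw [Submodule.mem_orthogonal]
  intro v hv
  obtain ⟨U₀, φ, hU2, hUm, hφm, hφ2, hve⟩ := (mem_Kpart_iff ℍ M j v).mp hv
  set X : Ω → ℝ := fun ω => U₀ ω + ∑ k ∈ Finset.range j, φ k ω * (M (k + 1) ω - M k ω)
    with hXdef
  have hXm : StronglyMeasurable[𝔽 j] X := by
    refine StronglyMeasurable.add ?_ ?_
    · exact hUm.mono ((ℍ.mono (Nat.zero_le j)).trans (hle j))
    · refine Finset.stronglyMeasurable_fun_sum _ fun k hk => ?_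
      have hkj : k < j := Finset.mem_range.mp hk
      refine StronglyMeasurable.mul ?_ (StronglyMeasurable.sub ?_ ?_)
      · exact (hφm k).mono ((ℍ.mono hkj.le).trans (hle j))
      · exact (hM.stronglyAdapted (k + 1)).mono (𝔽.mono hkj)
      · exact (hM.stronglyAdapted k).mono (𝔽.mono hkj.le)
  have hX2 : MemLp X 2 P := by
    refine MemLp.add hU2 ?_
    exact (memLp_finset_sum' (Finset.range j) (fun k _ => hφ2 k)).ae_eq
      (Eventually.of_forall fun ω => by simp [Finset.sum_apply])
  have h0 : ∫ ω, X ω * (ψ ω * (M (j + 1) ω - M j ω)) ∂P = 0 :=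
    integral_mul_incr_zero 𝔽 M hM j hXm hX2 (hψm.mono (hle j)) hψ2
  rw [L2_inner_eq_integral, ← h0]
  refine integral_congr_ae ?_
  filter_upwards [hve, hψe] with ω h1 h2
  rw [h1, h2]

lemma isClosed_Kpart (𝔽 ℍ : Filtration ℕ mΩ) (hle : ∀ k, ℍ k ≤ 𝔽 k)
    (M : ℕ → Ω → ℝ) (hM : Martingale M 𝔽 P) (j : ℕ) :
    IsClosed ((Kpart P ℍ M j : Submodule ℝ (Lp ℝ 2 P)) : Set (Lp ℝ 2 P)) := by
  induction j with
  | zero => exact isClosed_aestronglyMeasurable (ℍ.le 0)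
  | succ j ih =>
    exact isClosed_sup_of_orthogonal ih (isClosed_Ssub ℍ M j)
      (Ssub_le_orthogonal 𝔽 ℍ hle M hM j)

end helpers

section gkw_lemmas

variable {Ω : Type*} {mΩ : MeasurableSpace Ω} {P : Measure Ω} [IsProbabilityMeasure P]
  {N : ℕ} {𝔽 ℍ : Filtration ℕ mΩ}
  {M : ℕ → Ω → ℝ} {ξ U₀ ON : Ω → ℝ} {Hh : ℕ → Ω → ℝ}

lemma GKW.condexp_ON_zero (hdec : GKWDecomp P ℍ M N ξ U₀ ON Hh) :
    P[ON | ℍ 0] =ᵐ[P] 0 := by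
  obtain ⟨hU2, hUm, hHm, hH2, hON2, horth, hde⟩ := hdec
  have hONint : Integrable ON P := hON2.integrable one_le_two
  have hzero : (0 : Ω → ℝ) =ᵐ[P] P[ON | ℍ 0] := by
    refine ae_eq_condExp_of_forall_setIntegral_eq (ℍ.le 0) hONint
      (fun s _ _ => integrableOn_zero) (fun s hs _ => ?_)
      ⟨fun _ => 0, stronglyMeasurable_const, EventuallyEq.rfl⟩
    have hV2 : MemLp (s.indicator (fun _ => (1 : ℝ))) 2 P :=
      memLp_indicator_const 2 ((ℍ.le 0) s hs) 1 (Or.inr (measure_ne_top P s))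
    have hVm : StronglyMeasurable[ℍ 0] (s.indicator fun _ => (1 : ℝ)) :=
      stronglyMeasurable_const.indicator hs
    have h := horth (s.indicator fun _ => (1 : ℝ)) (fun _ _ => 0) hV2 hVm
      (fun _ => stronglyMeasurable_const)
      (fun k => by simpa using memLp_const (0 : ℝ) (μ := P))
    simp only [zero_mul, Finset.sum_const_zero, add_zero] at h
    have h2 : ∫ ω in s, ON ω ∂P = 0 := by
      rw [← h, ← integral_indicator ((ℍ.le 0) s hs)]
      refine integral_congr_ae (Eventually.of_forall fun ω => ?_)
      by_cases hω : ω ∈ s <;> simp [hω]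
    simp [h2]
  exact hzero.symm

lemma GKW.U0_eq (hle : ∀ k, ℍ k ≤ 𝔽 k) (hM : Martingale M 𝔽 P)
    (hdec : GKWDecomp P ℍ M N ξ U₀ ON Hh) :
    U₀ =ᵐ[P] P[ξ | ℍ 0] := by
  have hON0 := GKW.condexp_ON_zero hdec
  obtain ⟨hU2, hUm, hHm, hH2, hON2, horth, hde⟩ := hdec
  set S : Ω → ℝ := fun ω => ∑ k ∈ Finset.range N, Hh k ω * (M (k + 1) ω - M k ω) with hSdef
  have hSint : Integrable S P := by
    have h := integrable_finset_sum' (μ := P) (Finset.range N)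
      (f := fun k => fun ω => Hh k ω * (M (k + 1) ω - M k ω))
      (fun k _ => (hH2 k).integrable one_le_two)
    exact h.congr (Eventually.of_forall fun ω => by simp [Finset.sum_apply, hSdef])
  have hUint : Integrable U₀ P := hU2.integrable one_le_two
  have hONint : Integrable ON P := hON2.integrable one_le_two
  have hS0 : P[S | ℍ 0] =ᵐ[P] 0 := condexpH0_sum_zero 𝔽 ℍ hle M hM N hHm hH2
  have h1 : P[ξ | ℍ 0] =ᵐ[P] P[(fun ω => (U₀ ω + S ω) + ON ω) | ℍ 0] :=
    condExp_congr_ae hde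
  have h2 : P[(fun ω => (U₀ ω + S ω) + ON ω) | ℍ 0]
      =ᵐ[P] P[(fun ω => U₀ ω + S ω) | ℍ 0] + P[ON | ℍ 0] :=
    condExp_add (f := fun ω => U₀ ω + S ω) (g := ON) (hUint.add hSint) hONint _
  have h3 : P[(fun ω => U₀ ω + S ω) | ℍ 0] =ᵐ[P] P[U₀ | ℍ 0] + P[S | ℍ 0] :=
    condExp_add (f := U₀) (g := S) hUint hSint _
  have h4 : P[U₀ | ℍ 0] = U₀ :=
    condExp_of_stronglyMeasurable (ℍ.le 0) hUm hUint
  have : P[ξ | ℍ 0] =ᵐ[P] U₀ := by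
    filter_upwards [h1, h2, h3, hS0, hON0] with ω e1 e2 e3 e4 e5
    simp only [e1, e2, Pi.add_apply, e3, h4, e4, e5, Pi.zero_apply, add_zero]
  exact this.symm

end gkw_lemmas

/-- Discrete-time Galtchouk–Kunita–Watanabe decomposition under partial information:
existence, identification `U₀ = E[ξ|ℍ 0]`, `E[O_N|ℍ 0] = 0`, and uniqueness. -/
theorem stmt_9 {Ω : Type*} {mΩ : MeasurableSpace Ω} {P : Measure Ω} [IsProbabilityMeasure P]
    (N : ℕ) (𝔽 ℍ : Filtration ℕ mΩ) (hle : ∀ k, ℍ k ≤ 𝔽 k)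
    (M : ℕ → Ω → ℝ) (hM : Martingale M 𝔽 P) (hM2 : ∀ k, MemLp (M k) 2 P)
    (ξ : Ω → ℝ) (hξ : MemLp ξ 2 P) :
    (∃ (U₀ ON : Ω → ℝ) (Hh : ℕ → Ω → ℝ),
        GKWDecomp P ℍ M N ξ U₀ ON Hh ∧
        U₀ =ᵐ[P] P[ξ | ℍ 0] ∧
        P[ON | ℍ 0] =ᵐ[P] 0) ∧
    (∀ (U₀ ON : Ω → ℝ) (Hh : ℕ → Ω → ℝ) (U₀' ON' : Ω → ℝ) (Hh' : ℕ → Ω → ℝ),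
        GKWDecomp P ℍ M N ξ U₀ ON Hh → GKWDecomp P ℍ M N ξ U₀' ON' Hh' →
        U₀ =ᵐ[P] U₀' ∧
        (fun ω => ∑ k ∈ Finset.range N, Hh k ω * (M (k + 1) ω - M k ω)) =ᵐ[P]
          (fun ω => ∑ k ∈ Finset.range N, Hh' k ω * (M (k + 1) ω - M k ω)) ∧
        ON =ᵐ[P] ON') := by
  classical
  constructor
  · -- Existence
    have hKc : IsClosed ((Kpart P ℍ M N : Submodule ℝ (Lp ℝ 2 P)) : Set (Lp ℝ 2 P)) :=
      isClosed_Kpart 𝔽 ℍ hle M hM N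
    haveI : CompleteSpace (Kpart P ℍ M N) := hKc.completeSpace_coe
    set ξL : Lp ℝ 2 P := hξ.toLp ξ with hξLdef
    set pr := (Kpart P ℍ M N).orthogonalProjectionOnto ξL with hprdef
    obtain ⟨U₀, Hh, hU2, hUm, hHm, hH2, hpre⟩ :=
      (mem_Kpart_iff ℍ M N (pr : Lp ℝ 2 P)).mp pr.2
    set S : Ω → ℝ := fun ω => ∑ k ∈ Finset.range N, Hh k ω * (M (k + 1) ω - M k ω)
      with hSdef
    have hUS2 : MemLp (fun ω => U₀ ω + S ω) 2 P := (Lp.memLp (pr : Lp ℝ 2 P)).ae_eq hpre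
    have hON2 : MemLp (fun ω => ξ ω - U₀ ω - S ω) 2 P :=
      (hξ.sub hUS2).ae_eq (Eventually.of_forall fun ω => by
        show ξ ω - (U₀ ω + S ω) = ξ ω - U₀ ω - S ω; ring)
    have hdec : GKWDecomp P ℍ M N ξ U₀ (fun ω => ξ ω - U₀ ω - S ω) Hh := by
      refine ⟨hU2, hUm, hHm, hH2, hON2, ?_, ?_⟩
      · intro V₀ φ hV2 hVm hφm hφ2
        have hg2 : MemLp (fun ω => V₀ ω + ∑ k ∈ Finset.range N,
            φ k ω * (M (k + 1) ω - M k ω)) 2 P := by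
          refine hV2.add ?_
          exact (memLp_finset_sum' (Finset.range N) (fun k _ => hφ2 k)).ae_eq
            (Eventually.of_forall fun ω => by simp [Finset.sum_apply])
        have hgK : hg2.toLp _ ∈ Kpart P ℍ M N :=
          (mem_Kpart_iff ℍ M N _).mpr ⟨V₀, φ, hV2, hVm, hφm, hφ2, hg2.coeFn_toLp⟩
        have horth := Submodule.sub_starProjection_mem_orthogonal (K := Kpart P ℍ M N) ξL
        have h0 : (inner ℝ (hg2.toLp _) (ξL - (pr : Lp ℝ 2 P)) : ℝ) = 0 :=
          (Submodule.mem_orthogonal _ _).mp horth _ hgK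
        rw [L2_inner_eq_integral] at h0
        refine Eq.trans ?_ h0
        refine integral_congr_ae ?_
        filter_upwards [hg2.coeFn_toLp, Lp.coeFn_sub ξL (pr : Lp ℝ 2 P),
          hξ.coeFn_toLp, hpre] with ω h1 h2 h3 h4
        rw [h1, h2, Pi.sub_apply, h3, h4]
        try ring
      · exact Eventually.of_forall fun ω => by
          show ξ ω = U₀ ω + S ω + (ξ ω - U₀ ω - S ω); ring
    exact ⟨U₀, fun ω => ξ ω - U₀ ω - S ω, Hh, hdec, GKW.U0_eq hle hM hdec,
      GKW.condexp_ON_zero hdec⟩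
  · -- Uniqueness
    intro U₀ ON Hh U₀' ON' Hh' hd1 hd2
    have hU0a := GKW.U0_eq hle hM hd1
    have hU0b := GKW.U0_eq hle hM hd2
    have hU0 : U₀ =ᵐ[P] U₀' := hU0a.trans hU0b.symm
    obtain ⟨hU2, hUm, hHm, hH2, hON2, horth, hde⟩ := hd1
    obtain ⟨hU2', hUm', hHm', hH2', hON2', horth', hde'⟩ := hd2
    set W₀ : Ω → ℝ := fun ω => U₀ ω - U₀' ω with hWdef
    set ψ : ℕ → Ω → ℝ := fun k ω => Hh k ω - Hh' k ω with hψdef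
    have hW2 : MemLp W₀ 2 P := (hU2.sub hU2').ae_eq (Eventually.of_forall fun ω => rfl)
    have hWm : StronglyMeasurable[ℍ 0] W₀ := hUm.sub hUm'
    have hψm : ∀ k, StronglyMeasurable[ℍ k] (ψ k) := fun k => (hHm k).sub (hHm' k)
    have hψ2 : ∀ k, MemLp (fun ω => ψ k ω * (M (k + 1) ω - M k ω)) 2 P := fun k =>
      ((hH2 k).sub (hH2' k)).ae_eq (Eventually.of_forall fun ω => by
        show Hh k ω * _ - Hh' k ω * _ = _; ring)
    set g : Ω → ℝ := fun ω => W₀ ω + ∑ k ∈ Finset.range N,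
      ψ k ω * (M (k + 1) ω - M k ω) with hgdef
    have hg2 : MemLp g 2 P := by
      refine hW2.add ?_
      exact (memLp_finset_sum' (Finset.range N) (fun k _ => hψ2 k)).ae_eq
        (Eventually.of_forall fun ω => by simp [Finset.sum_apply])
    have h1 : ∫ ω, ON ω * g ω ∂P = 0 := horth W₀ ψ hW2 hWm hψm hψ2
    have h2 : ∫ ω, ON' ω * g ω ∂P = 0 := horth' W₀ ψ hW2 hWm hψm hψ2
    have hgON : g =ᵐ[P] fun ω => ON' ω - ON ω := by
      filter_upwards [hde, hde'] with ω e1 e2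
      have hsum : ∑ k ∈ Finset.range N, ψ k ω * (M (k + 1) ω - M k ω)
          = (∑ k ∈ Finset.range N, Hh k ω * (M (k + 1) ω - M k ω))
            - ∑ k ∈ Finset.range N, Hh' k ω * (M (k + 1) ω - M k ω) := by
        rw [← Finset.sum_sub_distrib]
        exact Finset.sum_congr rfl fun k _ => by rw [hψdef]; ring
      show W₀ ω + _ = ON' ω - ON ω
      rw [hsum, hWdef]
      simp only
      linear_combination e2 - e1
    have h3 : ∫ ω, (ON ω - ON' ω) * g ω ∂P = 0 := by
      have hi1 : Integrable (fun ω => ON ω * g ω) P := memL2_mul_integrable hON2 hg2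
      have hi2 : Integrable (fun ω => ON' ω * g ω) P := memL2_mul_integrable hON2' hg2
      have := integral_sub hi1 hi2
      simp only [h1, h2, sub_zero] at this
      rw [← this]
      exact integral_congr_ae (Eventually.of_forall fun ω => by ring)
    have hsq : ∫ ω, (ON ω - ON' ω) ^ 2 ∂P = 0 := by
      have h4 : ∫ ω, (ON ω - ON' ω) * (ON' ω - ON ω) ∂P = 0 := by
        rw [← h3]
        refine integral_congr_ae ?_
        filter_upwards [hgON] with ω h
        rw [h]
      have h5 : ∫ ω, -((ON ω - ON' ω) ^ 2) ∂P = 0 := by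
        rw [← h4]
        exact integral_congr_ae (Eventually.of_forall fun ω => by ring)
      rw [integral_neg] at h5
      linarith
    have hdiff2 : MemLp (fun ω => ON ω - ON' ω) 2 P :=
      (hON2.sub hON2').ae_eq (Eventually.of_forall fun ω => rfl)
    have hONeq : ON =ᵐ[P] ON' := by
      have hint : Integrable (fun ω => (ON ω - ON' ω) ^ 2) P := by
        have := memL2_mul_integrable hdiff2 hdiff2
        exact this.congr (Eventually.of_forall fun ω => by ring)
      have := (integral_eq_zero_iff_of_nonneg (fun ω => sq_nonneg _) hint).mp hsq
      filter_upwards [this] with ω h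
      have : (ON ω - ON' ω) ^ 2 = 0 := h
      have := pow_eq_zero_iff (n := 2) (by norm_num) |>.mp this
      linarith
    refine ⟨hU0, ?_, hONeq⟩
    filter_upwards [hde, hde', hU0, hONeq] with ω e1 e2 e3 e4
    linear_combination e2 - e1 - e3 - e4
end

section
/- Let O_N be a square-integrable random variable such that E[O_N · Σ_{k=0}^{N−1} φ_k·ΔM_k] = 0 for every admissible ℍ-predictable process φ, and set O_n := E[O_N | F_n] for n ≤ N. Then for every n ≤ N and every admissible ℍ-predictable process φ, E[(O_N − O_n) · Σ_{k=n}^{N−1} φ_k·ΔM_k | H_n] = 0 P-almost surely. -/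
open MeasureTheory
open scoped ENNReal

lemma aux_integrable_mul {α : Type*} {m0 : MeasurableSpace α} {μ : Measure α}
    [IsFiniteMeasure μ] {f g : α → ℝ} (hf : MemLp f 2 μ) (hg : MemLp g 2 μ) :
    Integrable (fun ω => f ω * g ω) μ := by
  rw [← memLp_one_iff_integrable]
  exact hg.smul hf

lemma aux_memℒp_condexp_two {α : Type*} {m m0 : MeasurableSpace α} {μ : Measure α}
    [IsFiniteMeasure μ] (hm : m ≤ m0) {f : α → ℝ} (hf : MemLp f 2 μ) :
    MemLp (μ[f|m]) 2 μ := by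
  have hg2 : MemLp ((condExpL2 ℝ ℝ hm (hf.toLp f) : α →₂[μ] ℝ) : α → ℝ) 2 μ := Lp.memLp _
  refine hg2.ae_eq ?_
  refine ae_eq_condExp_of_forall_setIntegral_eq hm (hf.integrable one_le_two)
    (fun s _ _ => (hg2.integrable one_le_two).integrableOn)
    (fun s hs hμs => ?_) (aestronglyMeasurable_condExpL2 hm _)
  rw [integral_condExpL2_eq hm (hf.toLp f) hs hμs.ne]
  exact setIntegral_congr_ae (hm s hs) ((hf.coeFn_toLp).mono fun x hx _ => hx)

/-- Discrete form of the paper's Lemma 5.5: if the square-integrable `O_N` satisfies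
`E[O_N · Σ_{k<N} φ_k ΔM_k] = 0` for all admissible `ℍ`-predictable `φ`, then, with
`O_n = E[O_N | 𝔽 n]`, we have `E[(O_N − O_n) Σ_{k=n}^{N−1} φ_k ΔM_k | ℍ n] = 0` a.s. -/
theorem stmt_14 {Ω : Type*} {mΩ : MeasurableSpace Ω} {P : Measure Ω} [IsProbabilityMeasure P]
    (N : ℕ) (𝔽 ℍ : Filtration ℕ mΩ) (hle : ∀ k, ℍ k ≤ 𝔽 k)
    (M : ℕ → Ω → ℝ) (hM : Martingale M 𝔽 P) (hM2 : ∀ k, MemLp (M k) 2 P)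
    (ON : Ω → ℝ) (hON : MemLp ON 2 P)
    (horth : ∀ φ : ℕ → Ω → ℝ, (∀ k, StronglyMeasurable[ℍ k] (φ k)) →
      (∀ k, MemLp (fun ω => φ k ω * (M (k + 1) ω - M k ω)) 2 P) →
      ∫ ω, ON ω * ∑ k ∈ Finset.range N, φ k ω * (M (k + 1) ω - M k ω) ∂P = 0) :
    ∀ n ≤ N, ∀ φ : ℕ → Ω → ℝ, (∀ k, StronglyMeasurable[ℍ k] (φ k)) →
      (∀ k, MemLp (fun ω => φ k ω * (M (k + 1) ω - M k ω)) 2 P) →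
      P[fun ω => (ON ω - (P[ON | 𝔽 n]) ω) *
          ∑ k ∈ Finset.Ico n N, φ k ω * (M (k + 1) ω - M k ω) | ℍ n] =ᵐ[P] 0 := by
  intro n hn φ hφm hφ2
  have hmn : ℍ n ≤ mΩ := (hle n).trans (𝔽.le n)
  have hFn : 𝔽 n ≤ mΩ := 𝔽.le n
  set S : Ω → ℝ := fun ω => ∑ k ∈ Finset.Ico n N, φ k ω * (M (k + 1) ω - M k ω) with hSdef
  have hS2 : MemLp S 2 P := memLp_finsetSum _ (fun k _ => hφ2 k)
  set On : Ω → ℝ := P[ON | 𝔽 n] with hOndef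
  have hOn2 : MemLp On 2 P := aux_memℒp_condexp_two hFn hON
  have hD2 : MemLp (fun ω => ON ω - On ω) 2 P := hON.sub hOn2
  have hf_int : Integrable (fun ω => (ON ω - On ω) * S ω) P := aux_integrable_mul hD2 hS2
  have hterm_int : ∀ k, Integrable (fun ω => φ k ω * (M (k + 1) ω - M k ω)) P :=
    fun k => (hφ2 k).integrable one_le_two
  -- conditional expectation of each increment term vanishes
  have hcond0 : ∀ k, n ≤ k →
      P[fun ω => φ k ω * (M (k + 1) ω - M k ω) | 𝔽 n] =ᵐ[P] 0 := by
    intro k hk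
    have hΔint : Integrable (fun ω => M (k + 1) ω - M k ω) P :=
      ((hM2 (k + 1)).sub (hM2 k)).integrable one_le_two
    have h1 : P[fun ω => M (k + 1) ω - M k ω | 𝔽 k] =ᵐ[P] 0 := by
      have hsub := condExp_sub (m := 𝔽 k) (μ := P) (hM.integrable (k + 1)) (hM.integrable k)
      refine hsub.trans ?_
      filter_upwards [hM.condExp_ae_eq (Nat.le_succ k), hM.condExp_ae_eq (le_refl k)]
        with ω h1 h2
      simp [h1, h2]
    have h2 : P[fun ω => φ k ω * (M (k + 1) ω - M k ω) | 𝔽 k] =ᵐ[P] 0 := by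
      have hpull := condExp_mul_of_stronglyMeasurable_left (μ := P) (m := 𝔽 k)
        ((hφm k).mono (hle k)) (hterm_int k) hΔint
      refine hpull.trans ?_
      filter_upwards [h1] with ω hω
      simp only [Pi.mul_apply, hω, Pi.zero_apply, mul_zero]
    calc P[fun ω => φ k ω * (M (k + 1) ω - M k ω) | 𝔽 n]
        =ᵐ[P] P[P[fun ω => φ k ω * (M (k + 1) ω - M k ω) | 𝔽 k] | 𝔽 n] :=
          (condExp_condExp_of_le (𝔽.mono hk) (𝔽.le k)).symm
      _ =ᵐ[P] P[(0 : Ω → ℝ) | 𝔽 n] := condExp_congr_ae h2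
      _ =ᵐ[P] 0 := by rw [condExp_zero]
  have hcondS : P[S | 𝔽 n] =ᵐ[P] 0 := by
    have hS_eq : S = ∑ k ∈ Finset.Ico n N, (fun ω => φ k ω * (M (k + 1) ω - M k ω)) := by
      funext ω; simp [hSdef]
    rw [hS_eq]
    refine (condExp_finsetSum (fun k _ => hterm_int k) (𝔽 n)).trans ?_
    have := eventuallyEq_sum (l := MeasureTheory.ae P) (s := Finset.Ico n N)
      (f := fun k => P[fun ω => φ k ω * (M (k + 1) ω - M k ω) | 𝔽 n])
      (g := fun _ => (0 : Ω → ℝ))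
      (fun k hk => hcond0 k (Finset.mem_Ico.mp hk).1)
    refine this.trans ?_
    simp
  -- integral of O_n * S over ℍ n-sets vanishes
  have hOnS_int : Integrable (fun ω => On ω * S ω) P := aux_integrable_mul hOn2 hS2
  have hBcond : P[fun ω => On ω * S ω | 𝔽 n] =ᵐ[P] 0 := by
    have hpull := condExp_mul_of_stronglyMeasurable_left (μ := P) (m := 𝔽 n)
      (stronglyMeasurable_condExp (f := ON)) hOnS_int (hS2.integrable one_le_two)
    refine hpull.trans ?_
    filter_upwards [hcondS] with ω hω
    simp only [Pi.mul_apply, hω, Pi.zero_apply, mul_zero]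
  have hB : ∀ s : Set Ω, MeasurableSet[ℍ n] s → ∫ x in s, On x * S x ∂P = 0 := by
    intro s hs
    rw [← setIntegral_condExp hFn hOnS_int ((hle n) s hs)]
    rw [setIntegral_congr_ae (hFn s ((hle n) s hs)) (hBcond.mono fun ω hω _ => hω)]
    simp
  -- integral of O_N * S over ℍ n-sets vanishes, via the orthogonality hypothesis
  have hA : ∀ s : Set Ω, MeasurableSet[ℍ n] s → ∫ x in s, ON x * S x ∂P = 0 := by
    intro s hs
    have hs0 : MeasurableSet s := hmn s hs
    set ψ : ℕ → Ω → ℝ :=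
      fun k => if n ≤ k then (fun ω => Set.indicator s (fun _ => (1 : ℝ)) ω * φ k ω) else 0
      with hψdef
    have hψm : ∀ k, StronglyMeasurable[ℍ k] (ψ k) := by
      intro k
      by_cases hk : n ≤ k
      · simp only [hψdef, if_pos hk]
        exact (stronglyMeasurable_const.indicator (ℍ.mono hk s hs)).mul (hφm k)
      · simp only [hψdef, if_neg hk]
        exact stronglyMeasurable_zero
    have hψ2 : ∀ k, MemLp (fun ω => ψ k ω * (M (k + 1) ω - M k ω)) 2 P := by
      intro k
      by_cases hk : n ≤ k
      · refine ((hφ2 k).indicator hs0).ae_eq (Filter.Eventually.of_forall fun ω => ?_)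
        simp only [hψdef, if_pos hk]
        by_cases hω : ω ∈ s <;>
          simp [Set.indicator_of_mem, Set.indicator_of_notMem, hω, mul_assoc]
      · refine (memLp_const (0 : ℝ)).ae_eq (Filter.Eventually.of_forall fun ω => ?_)
        simp [hψdef, if_neg hk]
    have hkey : ∀ ω, ON ω * ∑ k ∈ Finset.range N, ψ k ω * (M (k + 1) ω - M k ω)
        = Set.indicator s (fun ω => ON ω * S ω) ω := by
      intro ω
      have hsum : ∑ k ∈ Finset.range N, ψ k ω * (M (k + 1) ω - M k ω)
          = Set.indicator s (fun _ => (1 : ℝ)) ω * S ω := by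
        rw [Finset.range_eq_Ico, ← Finset.sum_Ico_consecutive _ (Nat.zero_le n) hn]
        have h1 : ∑ k ∈ Finset.Ico 0 n, ψ k ω * (M (k + 1) ω - M k ω) = 0 := by
          refine Finset.sum_eq_zero fun k hk => ?_
          have : ¬ n ≤ k := by
            have := (Finset.mem_Ico.mp hk).2; omega
          simp [hψdef, if_neg this]
        have h2 : ∑ k ∈ Finset.Ico n N, ψ k ω * (M (k + 1) ω - M k ω)
            = ∑ k ∈ Finset.Ico n N,
                Set.indicator s (fun _ => (1 : ℝ)) ω * (φ k ω * (M (k + 1) ω - M k ω)) := by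
          refine Finset.sum_congr rfl fun k hk => ?_
          simp [hψdef, if_pos (Finset.mem_Ico.mp hk).1, mul_assoc]
        rw [h1, h2, zero_add, ← Finset.mul_sum]
      rw [hsum]
      by_cases hω : ω ∈ s <;>
        simp [Set.indicator_of_mem, Set.indicator_of_notMem, hω, hSdef]
    have h0 := horth ψ hψm hψ2
    calc ∫ x in s, ON x * S x ∂P
        = ∫ ω, Set.indicator s (fun ω => ON ω * S ω) ω ∂P := (integral_indicator hs0).symm
      _ = ∫ ω, ON ω * ∑ k ∈ Finset.range N, ψ k ω * (M (k + 1) ω - M k ω) ∂P := by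
          simp_rw [hkey]
      _ = 0 := h0
  -- assemble via uniqueness of the conditional expectation
  refine (ae_eq_condExp_of_forall_setIntegral_eq hmn hf_int
    (fun s _ _ => (integrable_zero _ _ _).integrableOn)
    (fun s hs _ => ?_)
    (StronglyMeasurable.aestronglyMeasurable stronglyMeasurable_zero)).symm
  have hsplit : ∫ x in s, (ON x - On x) * S x ∂P
      = ∫ x in s, ON x * S x ∂P - ∫ x in s, On x * S x ∂P := by
    simp_rw [sub_mul]
    exact integral_sub ((aux_integrable_mul hON hS2).integrableOn) (hOnS_int.integrableOn)
  simp [hsplit, hA s hs, hB s hs]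
end
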